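/- arXiv:1511.09055 — 8 statements merged into one kernel-verified Lean document; each statement's English description precedes it below -/
import Mathlib

section
/- If T is a contraction on a Hilbert space H and Re(T^2) ≥ I, then T^2 = I. -/
open ContinuousLinearMap

/-- The modulus `|T| = (T*T)^{1/2}` of an operator. -/
noncomputable def absOp {H : Type*} [NormedAddCommGroup H] [InnerProductSpace ℂ H]
    [CompleteSpace H] (T : H →L[ℂ] H) : H →L[ℂ] H :=
  CFC.sqrt (adjoint T * T)

/-- The real part `Re T = (T + T*)/2` of an operator. -/
noncomputable def reOp {H : Type*} [NormedAddCommGroup H] [InnerProductSpace ℂ H]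
    [CompleteSpace H] (T : H →L[ℂ] H) : H →L[ℂ] H :=
  (2 : ℂ)⁻¹ • (T + adjoint T)

/-- `|Re T| = ((Re T)^2)^{1/2}`. -/
noncomputable def absRe {H : Type*} [NormedAddCommGroup H] [InnerProductSpace ℂ H]
    [CompleteSpace H] (T : H →L[ℂ] H) : H →L[ℂ] H :=
  CFC.sqrt (reOp T ^ 2)

/-- If `T` is a contraction and `Re (T²) ≥ I`, then `T² = I`. -/
theorem stmt1 {H : Type*} [NormedAddCommGroup H] [InnerProductSpace ℂ H] [CompleteSpace H]
    (T : H →L[ℂ] H) (hT : ‖T‖ ≤ 1) (h : (1 : H →L[ℂ] H) ≤ reOp (T ^ 2)) :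
    T ^ 2 = 1 := by
  set S := T ^ 2 with hS
  have hSnorm : ‖S‖ ≤ 1 := by
    calc ‖T ^ 2‖ ≤ ‖T‖ ^ 2 := norm_pow_le' T two_pos
    _ ≤ 1 := by nlinarith [norm_nonneg T]
  ext x
  have hpos := ((le_def _ _).mp h).2 x
  rw [reApplyInnerSelf] at hpos
  have key : ‖x‖ ^ 2 ≤ RCLike.re (inner ℂ (S x) x) := by
    have : RCLike.re (inner ℂ ((reOp S - 1) x) x) =
        RCLike.re (inner ℂ (S x) x) - ‖x‖ ^ 2 := by
      simp only [reOp, sub_apply, smul_apply, add_apply, one_apply, inner_sub_left,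
        inner_smul_left, inner_add_left]
      rw [adjoint_inner_left]
      have h1 : inner ℂ x (S x) = starRingEnd ℂ (inner ℂ (S x) x) := by
        rw [← inner_conj_symm]
      rw [h1]
      have h2 : (inner ℂ x x).re = ‖x‖ ^ 2 := inner_self_eq_norm_sq (𝕜 := ℂ) x
      have h3 : (starRingEnd ℂ) (2⁻¹ : ℂ) = 2⁻¹ := by rw [map_inv₀, Complex.conj_ofNat]
      simp only [RCLike.re_to_complex, h3, Complex.sub_re, Complex.mul_re, Complex.add_re,
        Complex.add_im, Complex.conj_re, Complex.conj_im, h2]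
      have h4 : ((2 : ℂ)⁻¹).re = 2⁻¹ := by norm_num
      have h5 : ((2 : ℂ)⁻¹).im = 0 := by norm_num
      rw [h4, h5, show (1 : H →L[ℂ] H) x = x from rfl, h2]; ring
    linarith [hpos, this.symm.le]
  have hSx : ‖S x‖ ≤ ‖x‖ := by
    calc ‖S x‖ ≤ ‖S‖ * ‖x‖ := le_opNorm S x
    _ ≤ 1 * ‖x‖ := by gcongr
    _ = ‖x‖ := one_mul _
  have hz : ‖S x - x‖ ^ 2 ≤ 0 := by
    rw [@norm_sub_sq ℂ]
    nlinarith [norm_nonneg x, norm_nonneg (S x)]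
  have hn : ‖S x - x‖ = 0 := by nlinarith [norm_nonneg (S x - x)]
  have : S x - x = 0 := norm_eq_zero.mp hn
  simpa [sub_eq_zero] using this
end

section
/- Let T be a contraction on H with block matrix form T = [[W, R],[0, Q]] with respect to an orthogonal decomposition H = M ⊕ M^⊥, where T restricted to M (i.e., W on M) is a partial isometry. Then W*R = 0, i.e., the range of R is contained in the kernel of W*. -/
open ContinuousLinearMap
open scoped InnerProductSpace

set_option maxHeartbeats 1000000 in
/-- If a contraction `T` leaves `M` invariant with block form `[[W, R], [0, Q]]` where
`W` is a partial isometry on `M`, then `W* R = 0`. -/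
theorem stmt2 {H : Type*} [NormedAddCommGroup H] [InnerProductSpace ℂ H] [CompleteSpace H]
    (T : H →L[ℂ] H) (hT : ‖T‖ ≤ 1) (M : Submodule ℂ H) [CompleteSpace M]
    (W : M →L[ℂ] M) (hW : ∀ x : M, (W x : H) = T x)
    (hPI : IsIdempotentElem (adjoint W * W))
    (R : (Mᗮ : Submodule ℂ H) →L[ℂ] M) (hR : ∀ x : (Mᗮ : Submodule ℂ H), T x - R x ∈ Mᗮ) :
    (adjoint W).comp R = 0 := by
  set P : M →L[ℂ] M := adjoint W * W with hPdef
  -- W ∘ P = W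
  have hWP : ∀ v : M, P v = 0 → W v = 0 := by
    intro v hv
    have h1 : ⟪W v, W v⟫_ℂ = ⟪P v, v⟫_ℂ := by
      simp [hPdef, mul_apply, adjoint_inner_left]
    rw [hv] at h1
    simpa [inner_self_eq_zero] using h1
  have hWPW : ∀ z : M, W (P z) = W z := by
    intro z
    have : P (P z - z) = 0 := by
      have := congrFun (congrArg DFunLike.coe hPI) z
      change P (P z) = P z at this
      simp [map_sub, this]
    have := hWP _ this
    rw [map_sub, sub_eq_zero] at this
    exact this
  -- P ∘ W* = W*
  have hPsa : IsSelfAdjoint P := by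
    rw [isSelfAdjoint_iff', hPdef]
    rw [show (adjoint W * W) = (adjoint W) ∘L W from rfl, adjoint_comp, adjoint_adjoint]
  have hPWs : ∀ w : M, P (adjoint W w) = adjoint W w := by
    intro w
    have hcomp : W ∘L P = W := by ext z; exact congrArg Subtype.val (hWPW z)
    have := congrArg ContinuousLinearMap.adjoint hcomp
    rw [adjoint_comp] at this
    have h2 := congrFun (congrArg DFunLike.coe this) w
    simpa [comp_apply, hPsa.adjoint_eq] using h2
  -- W is isometric on range of W*
  have hIso : ∀ w : M, ‖W (adjoint W w)‖ ^ 2 = ‖adjoint W w‖ ^ 2 := by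
    intro w
    set u := adjoint W w
    have h1 : ⟪W u, W u⟫_ℂ = ⟪P u, u⟫_ℂ := by
      simp [hPdef, mul_apply, adjoint_inner_left]
    rw [hPWs] at h1
    have := congrArg Complex.re h1
    rwa [← inner_self_eq_norm_sq (𝕜 := ℂ), ← inner_self_eq_norm_sq (𝕜 := ℂ)]
  -- key inequality
  have key : ∀ (y : M) (x : (Mᗮ : Submodule ℂ H)), ‖W y + R x‖ ^ 2 ≤ ‖y‖ ^ 2 + ‖x‖ ^ 2 := by
    intro y x
    have hTle : ‖T ((y : H) + (x : H))‖ ^ 2 ≤ ‖(y : H) + (x : H)‖ ^ 2 := by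
      have := T.le_opNorm ((y : H) + (x : H))
      have h := this.trans (by nlinarith [norm_nonneg ((y : H) + (x : H))] :
        ‖T‖ * ‖(y : H) + (x : H)‖ ≤ ‖(y : H) + (x : H)‖)
      nlinarith [norm_nonneg (T ((y : H) + (x : H)))]
    have hsplit : T ((y : H) + (x : H)) = ((W y + R x : M) : H) + ((T x - (R x : H))) := by
      rw [map_add, ← hW y]
      push_cast
      abel
    have horth1 : ⟪((W y + R x : M) : H), (T (x : H) - (R x : H))⟫_ℂ = 0 := by
      exact Submodule.inner_right_of_mem_orthogonal (W y + R x).2 (hR x)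
    have horth2 : ⟪(y : H), (x : H)⟫_ℂ = 0 :=
      Submodule.inner_right_of_mem_orthogonal y.2 x.2
    have hp1 : ‖T ((y : H) + (x : H))‖ ^ 2
        = ‖((W y + R x : M) : H)‖ ^ 2 + ‖T (x : H) - (R x : H)‖ ^ 2 := by
      rw [hsplit, norm_add_sq (𝕜 := ℂ), horth1]
      simp
    have hp2 : ‖(y : H) + (x : H)‖ ^ 2 = ‖(y : H)‖ ^ 2 + ‖(x : H)‖ ^ 2 := by
      rw [norm_add_sq (𝕜 := ℂ), horth2]; simp
    have hn : ‖((W y + R x : M) : H)‖ = ‖W y + R x‖ := rfl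
    have hny : ‖(y : H)‖ = ‖y‖ := rfl
    have hnx : ‖(x : H)‖ = ‖x‖ := rfl
    rw [hp1, hp2, hn, hny, hnx] at hTle
    nlinarith [sq_nonneg ‖T (x : H) - (R x : H)‖]
  -- conclude
  ext x
  simp only [comp_apply, zero_apply]
  set u := adjoint W (R x) with hu
  clear_value u
  by_contra hne
  have hu2 : (0:ℝ) < ‖u‖ ^ 2 := by have := norm_pos_iff.mpr hne; positivity
  set t : ℝ := (‖x‖ ^ 2 + 1) / (2 * ‖u‖ ^ 2) with ht
  have ht0 : 0 < t := by positivity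
  have hun : ‖u‖ ≠ 0 := by intro h; rw [h] at hu2; simp at hu2
  have h2t : 2 * (t * ‖u‖ ^ 2) = ‖x‖ ^ 2 + 1 := by
    have hstep : t * ‖u‖ ^ 2 = (‖x‖ ^ 2 + 1) / 2 := by
      rw [ht, div_mul_eq_mul_div, mul_div_mul_right _ _ hu2.ne']
    rw [hstep]; ring
  clear_value t
  have hk := key ((t : ℂ) • u) x
  have hinner : ⟪W u, (R x : M)⟫_ℂ = (‖u‖ ^ 2 : ℝ) := by
    rw [← adjoint_inner_right, ← hu, inner_self_eq_norm_sq_to_K]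
    norm_num [← Complex.ofReal_pow, Complex.ofReal_re]
  have hWsmul : W ((t : ℂ) • u) = (t : ℂ) • W u := map_smul W _ _
  have hlhs : ‖W ((t : ℂ) • u) + R x‖ ^ 2
      = t ^ 2 * ‖W u‖ ^ 2 + 2 * (t * ‖u‖ ^ 2) + ‖R x‖ ^ 2 := by
    rw [hWsmul, norm_add_sq (𝕜 := ℂ), inner_smul_left, hinner, norm_smul]
    simp only [Complex.conj_ofReal, ← Complex.ofReal_pow, ← Complex.ofReal_mul,
      Complex.ofReal_re, RCLike.ofReal_re, Complex.norm_real, Real.norm_eq_abs, mul_pow, sq_abs]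
    norm_num [← Complex.ofReal_pow, Complex.ofReal_re]
  have hIsoU : ‖W u‖ ^ 2 = ‖u‖ ^ 2 := by rw [hu]; exact hIso (R x)
  have hns : ‖(t : ℂ) • u‖ ^ 2 = t ^ 2 * ‖u‖ ^ 2 := by
    rw [norm_smul]
    simp [Complex.norm_real, Real.norm_eq_abs, mul_pow, sq_abs]
  rw [hlhs, hns, hIsoU] at hk
  nlinarith [sq_nonneg ‖R x‖]
end

section
/- For every contraction T on a Hilbert space H there exists a maximum closed subspace M invariant for T on which T is a partial isometry, and it satisfies N(T) ⊆ M ⊆ N(T) ⊕ N(I - T*T). -/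
open ContinuousLinearMap
open scoped InnerProductSpace

section Aux

variable {H : Type*} [NormedAddCommGroup H] [InnerProductSpace ℂ H] [CompleteSpace H]

lemma aux_contraction (T : H →L[ℂ] H) (hT : ‖T‖ ≤ 1) (x : H) : ‖T x‖ ≤ ‖x‖ := by
  calc ‖T x‖ ≤ ‖T‖ * ‖x‖ := T.le_opNorm x
  _ ≤ 1 * ‖x‖ := by gcongr
  _ = ‖x‖ := one_mul _

lemma aux_adjoint_contraction (T : H →L[ℂ] H) (hT : ‖T‖ ≤ 1) (x : H) :
    ‖adjoint T x‖ ≤ ‖x‖ := by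
  have h : ‖adjoint T‖ = ‖T‖ := by
    simpa using (ContinuousLinearMap.adjoint (𝕜 := ℂ) (E := H) (F := H)).norm_map T
  calc ‖adjoint T x‖ ≤ ‖adjoint T‖ * ‖x‖ := (adjoint T).le_opNorm x
  _ ≤ 1 * ‖x‖ := by rw [h]; gcongr
  _ = ‖x‖ := one_mul _

lemma aux_inner_adj (T : H →L[ℂ] H) (x : H) :
    RCLike.re ⟪adjoint T (T x), x⟫_ℂ = ‖T x‖ ^ 2 := by
  rw [ContinuousLinearMap.adjoint_inner_left]
  exact inner_self_eq_norm_sq (𝕜 := ℂ) (T x)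

/-- For a contraction, `‖T x‖ = ‖x‖` implies `T*T x = x`. -/
lemma aux_isom_fixed (T : H →L[ℂ] H) (hT : ‖T‖ ≤ 1) (x : H)
    (hx : ‖T x‖ = ‖x‖) : adjoint T (T x) = x := by
  have h1 : ‖adjoint T (T x) - x‖ ^ 2 =
      ‖adjoint T (T x)‖ ^ 2 - 2 * RCLike.re ⟪adjoint T (T x), x⟫_ℂ + ‖x‖ ^ 2 :=
    norm_sub_sq (𝕜 := ℂ) _ _
  rw [aux_inner_adj] at h1
  have h2 : ‖adjoint T (T x)‖ ≤ ‖x‖ :=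
    (aux_adjoint_contraction T hT (T x)).trans (le_of_eq hx)
  have h3 : ‖adjoint T (T x)‖ ^ 2 ≤ ‖x‖ ^ 2 := by
    have := norm_nonneg (adjoint T (T x)); nlinarith
  have h4 : ‖adjoint T (T x) - x‖ ^ 2 ≤ 0 := by rw [h1, hx]; nlinarith
  have h5 : ‖adjoint T (T x) - x‖ = 0 := by nlinarith [norm_nonneg (adjoint T (T x) - x)]
  rw [← sub_eq_zero]
  exact norm_eq_zero.mp h5

/-- Conversely, `T*T x = x` implies `‖T x‖ = ‖x‖`. -/
lemma aux_fixed_isom (T : H →L[ℂ] H) (x : H) (hx : adjoint T (T x) = x) :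
    ‖T x‖ = ‖x‖ := by
  have h1 := aux_inner_adj T x
  rw [hx] at h1
  have h2 : RCLike.re ⟪x, x⟫_ℂ = ‖x‖ ^ 2 := by
    exact inner_self_eq_norm_sq (𝕜 := ℂ) x
  have := h1.symm.trans h2
  exact (sq_eq_sq₀ (norm_nonneg _) (norm_nonneg _)).mp this

/-- `T*T x = x` implies `x ⊥ ker T`. -/
lemma aux_fixed_perp (T : H →L[ℂ] H) (x : H) (hx : adjoint T (T x) = x) :
    x ∈ (LinearMap.ker (T : H →ₗ[ℂ] H))ᗮ := by
  intro z hz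
  have hz' : T z = 0 := hz
  calc ⟪z, x⟫_ℂ = ⟪z, adjoint T (T x)⟫_ℂ := by rw [hx]
  _ = ⟪T z, T x⟫_ℂ := ContinuousLinearMap.adjoint_inner_right T _ _
  _ = 0 := by rw [hz', inner_zero_left]

end Aux

/-- For every contraction `T` there is a maximum closed invariant subspace `M` on which `T`
is a partial isometry, and `N(T) ⊆ M ⊆ N(T) ⊕ N(I - T*T)`. -/
theorem stmt4 {H : Type*} [NormedAddCommGroup H] [InnerProductSpace ℂ H] [CompleteSpace H]
    (T : H →L[ℂ] H) (hT : ‖T‖ ≤ 1) :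
    ∃ M : Submodule ℂ H, IsClosed (M : Set H) ∧ (∀ x ∈ M, T x ∈ M) ∧
      (∀ x ∈ M ⊓ (LinearMap.ker (T : H →ₗ[ℂ] H) ⊓ M)ᗮ, ‖T x‖ = ‖x‖) ∧
      (∀ M' : Submodule ℂ H, IsClosed (M' : Set H) → (∀ x ∈ M', T x ∈ M') →
        (∀ x ∈ M' ⊓ (LinearMap.ker (T : H →ₗ[ℂ] H) ⊓ M')ᗮ, ‖T x‖ = ‖x‖) → M' ≤ M) ∧
      LinearMap.ker (T : H →ₗ[ℂ] H) ≤ M ∧ M ≤ LinearMap.ker (T : H →ₗ[ℂ] H) ⊔ LinearMap.ker ((1 - adjoint T * T : H →L[ℂ] H) : H →ₗ[ℂ] H) := by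
  haveI : CompleteSpace (LinearMap.ker (T : H →ₗ[ℂ] H)) :=
    (ContinuousLinearMap.isClosed_ker T).completeSpace_coe
  set K : Submodule ℂ H := LinearMap.ker (T : H →ₗ[ℂ] H) with hK
  set P : H →L[ℂ] H := K.subtypeL ∘L K.orthogonalProjectionOnto with hPdef
  set A : H →L[ℂ] H := 1 - adjoint T * T with hAdef
  have hAapp : ∀ x : H, A x = x - adjoint T (T x) := fun x => rfl
  -- the candidate subspace
  set M : Submodule ℂ H := ⨅ k : ℕ, LinearMap.ker ((A ∘L ((1 - P) ∘L T ^ k) : H →L[ℂ] H) : H →ₗ[ℂ] H) with hMdef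
  have hmem : ∀ x : H, x ∈ M ↔ ∀ k : ℕ, A ((T ^ k) x - P ((T ^ k) x)) = 0 := by
    intro x
    rw [hMdef, Submodule.mem_iInf]
    refine forall_congr' fun k => ?_
    rw [LinearMap.mem_ker]
    rfl
  -- kernel of T is contained in M
  have hker : K ≤ M := by
    intro x hx
    have hx' : T x = 0 := hx
    rw [hmem]
    intro k
    cases k with
    | zero =>
      have hPx : P x = x := by
        exact (Submodule.starProjection_eq_self_iff (K := K)).mpr hx
      simp [pow_zero, hPx]
    | succ n =>
      have : (T ^ (n + 1)) x = 0 := by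
        rw [pow_succ, ContinuousLinearMap.mul_apply, hx']
        simp
      simp [this]
  have hkerinf : K ⊓ M = K := inf_eq_left.mpr hker
  refine ⟨M, ?_, ?_, ?_, ?_, hker, ?_⟩
  · -- closed
    have : (M : Set H) = ⋂ k : ℕ, (LinearMap.ker ((A ∘L ((1 - P) ∘L T ^ k) : H →L[ℂ] H) : H →ₗ[ℂ] H) : Set H) := by
      rw [hMdef]; exact Submodule.coe_iInf _
    rw [this]
    exact isClosed_iInter fun k => ContinuousLinearMap.isClosed_ker _
  · -- invariant
    intro x hx
    rw [hmem] at hx ⊢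
    intro k
    have : (T ^ k) (T x) = (T ^ (k + 1)) x := by
      rw [pow_succ, ContinuousLinearMap.mul_apply]
    rw [this]
    exact hx (k + 1)
  · -- partial isometry on M
    intro x hx
    rw [hkerinf] at hx
    obtain ⟨hxM, hxperp⟩ := hx
    have hPx : P x = 0 := by
      have := Submodule.orthogonalProjectionOnto_apply_of_mem_orthogonal
        (K := K) hxperp
      simp [P, this]
    have h0 := (hmem x).mp hxM 0
    rw [pow_zero] at h0
    simp only [ContinuousLinearMap.one_apply, hPx, sub_zero] at h0
    rw [hAapp, sub_eq_zero] at h0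
    exact aux_fixed_isom T x h0.symm
  · -- maximality
    intro M' hM'closed hM'inv hM'pi x hxM'
    have hTk : ∀ k : ℕ, (T ^ k) x ∈ M' := by
      intro k
      induction k with
      | zero => simpa using hxM'
      | succ n ih =>
        have : (T ^ (n + 1)) x = T ((T ^ n) x) := by
          rw [pow_succ', ContinuousLinearMap.mul_apply]
        rw [this]
        exact hM'inv _ ih
    have key : ∀ y ∈ M', A (y - P y) = 0 := by
      intro y hy
      set N : Submodule ℂ H := K ⊓ M' with hNdef
      haveI : CompleteSpace N := by
        have hNc : IsClosed (N : Set H) := by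
          rw [hNdef, Submodule.coe_inf]
          exact (ContinuousLinearMap.isClosed_ker T).inter hM'closed
        exact hNc.completeSpace_coe
      set n : H := (N.orthogonalProjectionOnto y : H) with hn
      have hnN : n ∈ N := (N.orthogonalProjectionOnto y).2
      set w : H := y - n with hw
      have hwM' : w ∈ M' := M'.sub_mem hy hnN.2
      have hwperp : w ∈ Nᗮ := Submodule.sub_starProjection_mem_orthogonal (K := N) y
      have hiso : ‖T w‖ = ‖w‖ := hM'pi w ⟨hwM', hwperp⟩
      have hfix : adjoint T (T w) = w := aux_isom_fixed T hT w hiso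
      have hwK : w ∈ Kᗮ := aux_fixed_perp T w hfix
      have hPw : P w = 0 := by
        have := Submodule.orthogonalProjectionOnto_apply_of_mem_orthogonal
          (K := K) hwK
        simp [P, this]
      have hPn : P n = n := by
        exact (Submodule.starProjection_eq_self_iff (K := K)).mpr hnN.1
      have hPy : y - P y = w := by
        have : y = n + w := by rw [hw]; abel
        rw [this, map_add, hPn, hPw]
        abel
      rw [hPy, hAapp, hfix, sub_self]
    rw [hmem]
    intro k
    exact key _ (hTk k)
  · -- M ≤ ker T ⊔ ker (1 - T*T)
    intro x hx
    have h0 := (hmem x).mp hx 0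
    rw [pow_zero] at h0
    simp only [ContinuousLinearMap.one_apply] at h0
    rw [Submodule.mem_sup]
    refine ⟨P x, ?_, x - P x, ?_, by abel⟩
    · exact (K.orthogonalProjectionOnto x).2
    · exact h0
end

section
/- For any contraction T on a Hilbert space, N(T*T - (T*T)^2) = N(T) ⊕ N(I - T*T), and this sum is orthogonal. -/
open ContinuousLinearMap

/-- For a contraction `T`, `N(T*T - (T*T)²) = N(T) ⊕ N(I - T*T)`, the sum being orthogonal. -/
theorem stmt5 {H : Type*} [NormedAddCommGroup H] [InnerProductSpace ℂ H] [CompleteSpace H]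
    (T : H →L[ℂ] H) (hT : ‖T‖ ≤ 1) :
    LinearMap.ker ((adjoint T * T - (adjoint T * T) ^ 2 : H →L[ℂ] H) : H →ₗ[ℂ] H) =
      LinearMap.ker (T : H →ₗ[ℂ] H) ⊔ LinearMap.ker ((1 - adjoint T * T : H →L[ℂ] H) : H →ₗ[ℂ] H) ∧
    ∀ x ∈ LinearMap.ker (T : H →ₗ[ℂ] H), ∀ y ∈ LinearMap.ker ((1 - adjoint T * T : H →L[ℂ] H) : H →ₗ[ℂ] H),
      (inner ℂ x y : ℂ) = 0 := by
  have key : ∀ z : H, adjoint T (T z) = 0 → T z = 0 := by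
    intro z h
    have h1 : (inner ℂ (T z) (T z) : ℂ) = 0 := by
      rw [← adjoint_inner_left, h, inner_zero_left]
    simpa using inner_self_eq_zero.mp h1
  constructor
  · apply le_antisymm
    · intro x hx
      have hx' : adjoint T (T x) - adjoint T (T (adjoint T (T x))) = 0 := by
        simpa [sub_apply, pow_two, mul_apply] using hx
      have h1 : x - adjoint T (T x) ∈ LinearMap.ker (T : H →ₗ[ℂ] H) := by
        refine LinearMap.mem_ker.mpr (key _ ?_)
        simp only [map_sub]
        rw [sub_eq_zero] at hx' ⊢
        exact hx'
      have h2 : adjoint T (T x) ∈ LinearMap.ker ((1 - adjoint T * T : H →L[ℂ] H) : H →ₗ[ℂ] H) := by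
        refine LinearMap.mem_ker.mpr ?_
        simp only [ContinuousLinearMap.coe_coe, sub_apply, one_apply, mul_apply]
        exact hx'
      have : x = (x - adjoint T (T x)) + adjoint T (T x) := by abel
      rw [this]
      exact Submodule.add_mem_sup h1 h2
    · refine sup_le ?_ ?_
      · intro x hx
        have hx' : T x = 0 := hx
        simp [LinearMap.mem_ker, sub_apply, pow_two, mul_apply, hx']
      · intro x hx
        have hx' : x - adjoint T (T x) = 0 := by
          simpa [sub_apply, mul_apply] using hx
        have hx'' : adjoint T (T x) = x := by rw [sub_eq_zero] at hx'; exact hx'.symm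
        simp [LinearMap.mem_ker, sub_apply, pow_two, mul_apply, hx'']
  · intro x hx y hy
    have hx' : T x = 0 := hx
    have hy' : adjoint T (T y) = y := by
      have : y - adjoint T (T y) = 0 := by simpa [sub_apply, mul_apply] using hy
      rw [sub_eq_zero] at this; exact this.symm
    calc (inner ℂ x y : ℂ) = inner ℂ x (adjoint T (T y)) := by rw [hy']
    _ = inner ℂ (T x) (T y) := adjoint_inner_right T x (T y)
    _ = 0 := by rw [hx', inner_zero_left]
end

section
/- Let T be a contraction satisfying |T| ≤ |Re T|. Then N(Re T) = N(T) ∩ N(T*). -/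
open ContinuousLinearMap

set_option synthInstance.maxHeartbeats 1000000
set_option maxHeartbeats 2000000
open scoped InnerProductSpace

lemma sa_inner_apply {H : Type*} [NormedAddCommGroup H] [InnerProductSpace ℂ H] [CompleteSpace H]
    {A : H →L[ℂ] H} (hA : IsSelfAdjoint A) (x : H) : ⟪A (A x), x⟫_ℂ = ⟪A x, A x⟫_ℂ := by
  rw [← ContinuousLinearMap.adjoint_inner_left, hA.adjoint_eq]

lemma sa_sq_apply_zero {H : Type*} [NormedAddCommGroup H] [InnerProductSpace ℂ H] [CompleteSpace H]
    {A : H →L[ℂ] H} (hA : IsSelfAdjoint A) {x : H} (h : A (A x) = 0) : A x = 0 := by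
  have : ⟪A x, A x⟫_ℂ = 0 := by rw [← sa_inner_apply hA x, h, inner_zero_left]
  exact inner_self_eq_zero.mp this

lemma pos_inner_zero {H : Type*} [NormedAddCommGroup H] [InnerProductSpace ℂ H] [CompleteSpace H]
    (P : H →L[ℂ] H) (hP : 0 ≤ P) (x : H) (hx : RCLike.re (⟪P x, x⟫_ℂ) = 0) : P x = 0 := by
  set Q := CFC.sqrt P with hQ
  have hQQ : Q * Q = P := CFC.sqrt_mul_sqrt_self P hP
  have hQpos : (0 : H →L[ℂ] H) ≤ Q := CFC.sqrt_nonneg _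
  have hQsa : IsSelfAdjoint Q := ((nonneg_iff_isPositive Q).mp hQpos).isSelfAdjoint
  have hnorm : ‖Q x‖ ^ 2 = RCLike.re (⟪P x, x⟫_ℂ) := by
    rw [← hQQ]
    rw [ContinuousLinearMap.mul_apply, sa_inner_apply hQsa, inner_self_eq_norm_sq]
  have hQx : Q x = 0 := by
    have h0 := hnorm.trans hx
    have h2 : ‖Q x‖ = 0 := pow_eq_zero_iff two_ne_zero |>.mp h0
    simpa using h2
  rw [← hQQ, ContinuousLinearMap.mul_apply, hQx, map_zero]

/-- For a contraction `T` with `|T| ≤ |Re T|`, one has `N(Re T) = N(T) ∩ N(T*)`. -/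
theorem stmt7 {H : Type*} [NormedAddCommGroup H] [InnerProductSpace ℂ H] [CompleteSpace H]
    (T : H →L[ℂ] H) (hT : ‖T‖ ≤ 1) (h : absOp T ≤ absRe T) :
    LinearMap.ker (reOp T : H →ₗ[ℂ] H) = LinearMap.ker (T : H →ₗ[ℂ] H) ⊓
      LinearMap.ker ((adjoint T : H →L[ℂ] H) : H →ₗ[ℂ] H) := by
  have hre_sa : IsSelfAdjoint (reOp T) := by
    rw [IsSelfAdjoint, reOp, star_smul, star_add, star_eq_adjoint, star_eq_adjoint,
      adjoint_adjoint]
    simp [add_comm]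
  ext x
  simp only [LinearMap.mem_ker, Submodule.mem_inf, ContinuousLinearMap.coe_coe]
  constructor
  · intro hx
    have hsq_nonneg : (0 : H →L[ℂ] H) ≤ reOp T ^ 2 := by
      have := star_mul_self_nonneg (reOp T)
      rwa [hre_sa.star_eq, ← sq] at this
    have hSS : absRe T * absRe T = reOp T ^ 2 := CFC.sqrt_mul_sqrt_self _ hsq_nonneg
    have hSsa : IsSelfAdjoint (absRe T) :=
      ((nonneg_iff_isPositive _).mp (CFC.sqrt_nonneg _)).isSelfAdjoint
    have hSx : absRe T x = 0 := by
      apply sa_sq_apply_zero hSsa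
      have : (absRe T * absRe T) x = 0 := by
        rw [hSS]; simp [sq, ContinuousLinearMap.mul_apply, hx]
      simpa [ContinuousLinearMap.mul_apply] using this
    have hPpos : (0 : H →L[ℂ] H) ≤ absOp T := CFC.sqrt_nonneg _
    have hle := ((le_def _ _).mp h).inner_nonneg_left x
    have hge := ((nonneg_iff_isPositive _).mp hPpos).inner_nonneg_left x
    simp only [sub_apply, inner_sub_left, map_sub, hSx, inner_zero_left] at hle
    have hinner0 : RCLike.re (⟪absOp T x, x⟫_ℂ) = 0 := by
      have h1 := (Complex.nonneg_iff.mp hle).1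
      have h2 := (Complex.nonneg_iff.mp hge).1
      simp at h1
      rw [RCLike.re_to_complex]
      exact le_antisymm (by linarith) h2
    have hPx : absOp T x = 0 := pos_inner_zero _ hPpos x hinner0
    have hTTx : (adjoint T * T) x = 0 := by
      have : 0 ≤ adjoint T * T := by
        simpa [star_eq_adjoint] using star_mul_self_nonneg T
      rw [← CFC.sqrt_mul_sqrt_self (adjoint T * T) this, ContinuousLinearMap.mul_apply]
      show absOp T (absOp T x) = 0
      rw [hPx, map_zero]
    have hTx : T x = 0 := by
      have : ⟪T x, T x⟫_ℂ = 0 := by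
        rw [← ContinuousLinearMap.adjoint_inner_left]
        have : adjoint T (T x) = 0 := by simpa [ContinuousLinearMap.mul_apply] using hTTx
        rw [this, inner_zero_left]
      exact inner_self_eq_zero.mp this
    refine ⟨hTx, ?_⟩
    have hh := hx
    rw [reOp] at hh
    simp only [smul_apply, add_apply, hTx, zero_add, smul_eq_zero] at hh
    rcases hh with h' | h'
    · norm_num at h'
    · exact h'
  · rintro ⟨h1, h2⟩
    simp [reOp, h1, h2]
end

section
/- A partial isometry T satisfying |T| ≤ |Re T| is self-adjoint. -/
open ContinuousLinearMap

section Aux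

open scoped ComplexInnerProductSpace
open RCLike

variable {H : Type*} [NormedAddCommGroup H] [InnerProductSpace ℂ H] [CompleteSpace H]

/-- For a self-adjoint `A`, `‖A x‖ ^ 2 = re ⟪A ^ 2 x, x⟫`. -/
lemma sa_norm_sq (A : H →L[ℂ] H) (hA : IsSelfAdjoint A) (x : H) :
    ‖A x‖ ^ 2 = re ⟪(A ^ 2) x, x⟫ := by
  have h1 : ((A ^ 2) : H →L[ℂ] H) x = A (A x) := by
    rw [sq, ContinuousLinearMap.mul_apply]
  have h2 : (inner ℂ (A (A x)) x : ℂ) = inner ℂ (A x) (A x) := by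
    nth_rewrite 1 [← hA.adjoint_eq]
    exact adjoint_inner_left A x (A x)
  rw [h1, h2, inner_self_eq_norm_sq]

lemma norm_T_sq (T : H →L[ℂ] H) (x : H) :
    ‖T x‖ ^ 2 = re ⟪(adjoint T * T) x, x⟫ := by
  rw [ContinuousLinearMap.mul_apply, adjoint_inner_left, inner_self_eq_norm_sq]

end Aux

section Main

open scoped ComplexInnerProductSpace
open RCLike

variable {H : Type*} [NormedAddCommGroup H] [InnerProductSpace ℂ H] [CompleteSpace H]

lemma reOp_isSelfAdjoint (T : H →L[ℂ] H) : IsSelfAdjoint (reOp T) := by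
  rw [IsSelfAdjoint, reOp, star_smul, star_add, star_eq_adjoint, star_eq_adjoint,
    adjoint_adjoint]
  simp [add_comm]

lemma reOp_sq_nonneg (T : H →L[ℂ] H) : 0 ≤ reOp T ^ 2 := by
  have h : reOp T ^ 2 = star (reOp T) * reOp T := by
    rw [sq, (reOp_isSelfAdjoint T).star_eq]
  rw [h]
  exact star_mul_self_nonneg _

lemma absRe_sq (T : H →L[ℂ] H) : absRe T ^ 2 = reOp T ^ 2 :=
  CFC.sq_sqrt _ (reOp_sq_nonneg T)

lemma absRe_isSelfAdjoint (T : H →L[ℂ] H) : IsSelfAdjoint (absRe T) :=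
  (CFC.sqrt_nonneg (a := reOp T ^ 2)).isSelfAdjoint

lemma norm_absRe (T : H →L[ℂ] H) (x : H) : ‖absRe T x‖ = ‖reOp T x‖ := by
  have h1 : ‖absRe T x‖ ^ 2 = ‖reOp T x‖ ^ 2 := by
    rw [sa_norm_sq _ (absRe_isSelfAdjoint T), sa_norm_sq _ (reOp_isSelfAdjoint T), absRe_sq]
  nlinarith [norm_nonneg (absRe T x), norm_nonneg (reOp T x)]

lemma norm_two_inv : ‖(2 : ℂ)⁻¹‖ = 2⁻¹ := by
  rw [norm_inv]
  norm_num

end Main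

open scoped ComplexInnerProductSpace
open RCLike

set_option maxHeartbeats 1000000 in
/-- A partial isometry satisfying `|T| ≤ |Re T|` is self-adjoint. -/
theorem stmt8 {H : Type*} [NormedAddCommGroup H] [InnerProductSpace ℂ H] [CompleteSpace H]
    (T : H →L[ℂ] H) (hPI : IsIdempotentElem (adjoint T * T)) (h : absOp T ≤ absRe T) :
    adjoint T = T := by
  set P := adjoint T * T with hPdef
  have hPsa : IsSelfAdjoint P := by
    rw [hPdef, IsSelfAdjoint, star_mul, star_eq_adjoint, star_eq_adjoint, adjoint_adjoint]
  have hPpos : 0 ≤ P := by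
    rw [hPdef, ← star_eq_adjoint]
    exact star_mul_self_nonneg T
  have hPP : ∀ x, P (P x) = P x := fun x => by rw [← ContinuousLinearMap.mul_apply, hPI]
  have habs : absOp T = P := by
    have h2 : P ^ 2 = P := by rw [sq]; exact hPI
    rw [absOp, ← hPdef]
    conv_lhs => rw [← h2]
    exact CFC.sqrt_sq P hPpos
  have hTnorm : ∀ z, ‖T z‖ ^ 2 = re ⟪P z, z⟫ := fun z => norm_T_sq T z
  have hker : ∀ y, P y = 0 → T y = 0 := by
    intro y hy
    have h1 := hTnorm y
    rw [hy, inner_zero_left, map_zero] at h1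
    have : ‖T y‖ = 0 := by nlinarith [norm_nonneg (T y)]
    exact norm_eq_zero.mp this
  have hPnorm : ∀ z, ‖P z‖ ≤ ‖z‖ := by
    intro z
    have h1 : ‖P z‖ ^ 2 = re ⟪P z, z⟫ := by
      have := sa_norm_sq P hPsa z
      rwa [show (P ^ 2 : H →L[ℂ] H) z = P z by rw [sq, ContinuousLinearMap.mul_apply, hPP]] at this
    have h2 : re ⟪P z, z⟫ ≤ ‖P z‖ * ‖z‖ :=
      (re_le_norm _).trans (norm_inner_le_norm _ _)
    nlinarith [norm_nonneg (P z), norm_nonneg z]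
  have hTcon : ∀ z, ‖T z‖ ≤ ‖z‖ := by
    intro z
    have h1 := hTnorm z
    have h2 : re ⟪P z, z⟫ ≤ ‖P z‖ * ‖z‖ :=
      (re_le_norm _).trans (norm_inner_le_norm _ _)
    nlinarith [norm_nonneg (T z), norm_nonneg z, hPnorm z, norm_nonneg (P z)]
  have hTscon : ∀ z, ‖adjoint T z‖ ≤ ‖z‖ := by
    intro z
    have h1 : (⟪adjoint T z, adjoint T z⟫ : ℂ) = ⟪z, T (adjoint T z)⟫ :=
      adjoint_inner_left T (adjoint T z) z
    have h2 : ‖adjoint T z‖ ^ 2 = re ⟪z, T (adjoint T z)⟫ := by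
      rw [← h1, inner_self_eq_norm_sq]
    have h3 : re ⟪z, T (adjoint T z)⟫ ≤ ‖z‖ * ‖T (adjoint T z)‖ :=
      (re_le_norm _).trans (norm_inner_le_norm _ _)
    have h4 := hTcon (adjoint T z)
    nlinarith [norm_nonneg (adjoint T z), norm_nonneg z, norm_nonneg (T (adjoint T z))]
  have hTPapp : ∀ x, T (P x) = T x := by
    intro x
    have h1 : P (x - P x) = 0 := by rw [map_sub, hPP, sub_self]
    have h2 := hker _ h1
    rw [map_sub, sub_eq_zero] at h2
    exact h2.symm
  have hTP : T * P = T := by ext x; rw [ContinuousLinearMap.mul_apply]; exact hTPapp x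
  have hPTs : ∀ y, P (adjoint T y) = adjoint T y := by
    have hop : P * adjoint T = adjoint T := by
      have h1 := congrArg star hTP
      rwa [star_mul, hPsa.star_eq, star_eq_adjoint] at h1
    intro y
    rw [← ContinuousLinearMap.mul_apply, hop]
  have hre_norm : ∀ z, ‖reOp T z‖ = 2⁻¹ * ‖T z + adjoint T z‖ := by
    intro z
    rw [reOp, smul_apply, add_apply, norm_smul, norm_two_inv]
  have hran : ∀ x, P x = x → T x = adjoint T x := by
    intro x hx
    by_cases hx0 : x = 0
    · simp [hx0]
    have hxn : 0 < ‖x‖ := norm_pos_iff.mpr hx0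
    have hTx : ‖T x‖ = ‖x‖ := by
      have h1 := hTnorm x
      rw [hx, inner_self_eq_norm_sq] at h1
      nlinarith [norm_nonneg (T x)]
    have c0 : re ⟪absOp T x, x⟫ = ‖x‖ ^ 2 := by
      rw [habs, hx, inner_self_eq_norm_sq]
    have c1 : re ⟪absOp T x, x⟫ ≤ re ⟪absRe T x, x⟫ := by
      have h1 := ((le_def _ _).mp h).inner_nonneg_left x
      rw [sub_apply, inner_sub_left] at h1
      have h2 := (Complex.le_def.mp h1).1
      rw [Complex.zero_re, Complex.sub_re] at h2
      change (_ : ℂ).re ≤ (_ : ℂ).re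
      linarith
    have c2 : re ⟪absRe T x, x⟫ ≤ ‖reOp T x‖ * ‖x‖ := by
      calc re ⟪absRe T x, x⟫ ≤ ‖(⟪absRe T x, x⟫ : ℂ)‖ := re_le_norm _
        _ ≤ ‖absRe T x‖ * ‖x‖ := norm_inner_le_norm _ _
        _ = ‖reOp T x‖ * ‖x‖ := by rw [norm_absRe]
    have key2 : ‖x‖ ≤ ‖reOp T x‖ := by nlinarith
    have c3 : ‖reOp T x‖ ≤ 2⁻¹ * (‖T x‖ + ‖adjoint T x‖) := by
      rw [hre_norm]
      have := norm_add_le (T x) (adjoint T x)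
      linarith
    have hTs_le : ‖adjoint T x‖ ≤ ‖x‖ := hTscon x
    have hTsx : ‖adjoint T x‖ = ‖x‖ := by nlinarith [mul_le_mul_of_nonneg_right c3 (le_of_lt hxn)]
    have hsum : 2 * ‖x‖ ≤ ‖T x + adjoint T x‖ := by
      have h1 := hre_norm x
      linarith
    have hpar := parallelogram_law_with_norm ℂ (T x) (adjoint T x)
    have hz : ‖T x - adjoint T x‖ = 0 := by
      nlinarith [norm_nonneg (T x - adjoint T x), norm_nonneg (T x + adjoint T x)]
    exact sub_eq_zero.mp (norm_eq_zero.mp hz)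
  have hkerTs : ∀ y, P y = 0 → adjoint T y = 0 := by
    intro y hy
    have hw : P (adjoint T y) = adjoint T y := hPTs y
    have h1 : T (adjoint T y) = adjoint T (adjoint T y) := hran _ hw
    have h2 : (⟪adjoint T y, adjoint T y⟫ : ℂ) = ⟪y, T (adjoint T y)⟫ :=
      adjoint_inner_left T (adjoint T y) y
    have h3 : (⟪y, adjoint T (adjoint T y)⟫ : ℂ) = ⟪T y, adjoint T y⟫ :=
      adjoint_inner_right T y (adjoint T y)
    have h4 : (⟪adjoint T y, adjoint T y⟫ : ℂ) = 0 := by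
      rw [h2, h1, h3, hker y hy, inner_zero_left]
    exact inner_self_eq_zero.mp h4
  ext x
  have h1 : P (x - P x) = 0 := by rw [map_sub, hPP, sub_self]
  have e1 : adjoint T (x - P x) = 0 := hkerTs _ h1
  have e2 : T (x - P x) = 0 := hker _ h1
  have e3 : T (P x) = adjoint T (P x) := hran _ (hPP x)
  have e4 : adjoint T x = adjoint T (P x) + adjoint T (x - P x) := by
    rw [← map_add, add_sub_cancel]
  have e5 : T x = T (P x) + T (x - P x) := by
    rw [← map_add, add_sub_cancel]
  rw [e4, e1, add_zero, ← e3, e5, e2, add_zero]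
end

section
/- Let T ∈ B(H) be nonzero with block form T = [[S, R],[0, Q]] on H = G ⊕ G^⊥, where (1/‖T‖)S is an isometry on G and Q² = 0. If |T| ≤ |Re T|, then T is self-adjoint. -/
open ContinuousLinearMap

set_option synthInstance.maxHeartbeats 1000000
set_option maxHeartbeats 4000000

open RCLike in
/-- Cauchy–Schwarz (squared) for the semi-inner ℂ product of a positive operator. -/
lemma cs_sq' {H : Type*} [NormedAddCommGroup H] [InnerProductSpace ℂ H] [CompleteSpace H]
    (A : H →L[ℂ] H) (hA : 0 ≤ A) (u v : H) :
    (re (inner ℂ (A u) v : ℂ)) ^ 2 ≤ re (inner ℂ (A u) u : ℂ) * re (inner ℂ (A v) v : ℂ) := by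
  set D := CFC.sqrt A with hD
  have hDsa : IsSelfAdjoint D := IsSelfAdjoint.of_nonneg (CFC.sqrt_nonneg _)
  have hD2 : D ^ 2 = A := CFC.sq_sqrt A hA
  have key : ∀ w z : H, (inner ℂ (A w) z : ℂ) = inner ℂ (D w) (D z) := by
    intro w z
    have h0 : A w = D (D w) := by rw [← hD2]; rfl
    calc (inner ℂ (A w) z : ℂ) = inner ℂ ((adjoint D) (D w)) z := by rw [hDsa.adjoint_eq, ← h0]
    _ = inner ℂ (D w) (D z) := adjoint_inner_left _ _ _
  rw [key u v, key u u, key v v]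
  have h1 : |re (inner ℂ (D u) (D v) : ℂ)| ≤ ‖D u‖ * ‖D v‖ :=
    (abs_re_le_norm _).trans (norm_inner_le_norm _ _)
  rw [inner_self_eq_norm_sq (𝕜 := ℂ), inner_self_eq_norm_sq (𝕜 := ℂ), ← sq_abs]
  calc |re (inner ℂ (D u) (D v) : ℂ)| ^ 2 ≤ (‖D u‖ * ‖D v‖) ^ 2 :=
        pow_le_pow_left₀ (abs_nonneg _) h1 2
  _ = ‖D u‖ ^ 2 * ‖D v‖ ^ 2 := by ring

open RCLike in
/-- `‖P z‖² = re ⟪C z, z⟫` when `P` is self-adjoint with `P² = C`. -/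
lemma sqnorm_eq' {H : Type*} [NormedAddCommGroup H] [InnerProductSpace ℂ H] [CompleteSpace H]
    (P C : H →L[ℂ] H) (hP : IsSelfAdjoint P) (h2 : P ^ 2 = C) (z : H) :
    ‖P z‖ ^ 2 = re (inner ℂ (C z) z : ℂ) := by
  have h0 : C z = P (P z) := by rw [← h2]; rfl
  have h1 : (inner ℂ (C z) z : ℂ) = inner ℂ (P z) (P z) := by
    calc (inner ℂ (C z) z : ℂ) = inner ℂ ((adjoint P) (P z)) z := by rw [hP.adjoint_eq, ← h0]
    _ = inner ℂ (P z) (P z) := adjoint_inner_left _ _ _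
  rw [h1, inner_self_eq_norm_sq (𝕜 := ℂ)]

open RCLike in
/-- Equality case in Cauchy–Schwarz. -/
lemma eq_smul_of' {H : Type*} [NormedAddCommGroup H] [InnerProductSpace ℂ H]
    (u x : H) (c : ℝ) (hc0 : 0 ≤ c) (hu : ‖u‖ ≤ c * ‖x‖)
    (hre : c * ‖x‖ ^ 2 ≤ re (inner ℂ u x : ℂ)) :
    u = (c : ℂ) • x := by
  have hexp : ‖u - (c : ℂ) • x‖ ^ 2 =
      ‖u‖ ^ 2 - 2 * (c * re (inner ℂ u x : ℂ)) + c ^ 2 * ‖x‖ ^ 2 := by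
    rw [norm_sub_sq (𝕜 := ℂ)]
    rw [inner_smul_right]
    have h1 : re ((c : ℂ) * (inner ℂ u x : ℂ)) = c * re (inner ℂ u x : ℂ) := by
      exact re_ofReal_mul _ _
    have h2 : ‖(c : ℂ) • x‖ ^ 2 = c ^ 2 * ‖x‖ ^ 2 := by
      rw [norm_smul]
      simp [Complex.norm_real]
      rw [mul_pow, sq_abs]
    rw [h1, h2]
  have hc : 0 ≤ c * ‖x‖ := le_trans (norm_nonneg u) hu
  have hz : ‖u - (c : ℂ) • x‖ ^ 2 ≤ 0 := by
    rw [hexp]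
    nlinarith [pow_le_pow_left₀ (norm_nonneg u) hu 2,
      mul_le_mul_of_nonneg_left hre hc0]
  have h0 : ‖u - (c : ℂ) • x‖ = 0 := by
    nlinarith [norm_nonneg (u - (c : ℂ) • x)]
  rw [norm_eq_zero] at h0
  exact sub_eq_zero.mp h0

open RCLike in
/-- A nonzero operator with block form `[[S, R],[0, Q]]`, `S/‖T‖` an isometry on `G`,
`Q² = 0`, satisfying `|T| ≤ |Re T|`, is self-adjoint. -/
theorem stmt13 {H : Type*} [NormedAddCommGroup H] [InnerProductSpace ℂ H] [CompleteSpace H]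
    (T : H →L[ℂ] H) (hT0 : T ≠ 0) (G : Submodule ℂ H) (hGc : IsClosed (G : Set H))
    (hGinv : ∀ x ∈ G, T x ∈ G)
    (hS : ∀ x ∈ G, ‖T x‖ = ‖T‖ * ‖x‖)
    (Q : (Gᗮ : Submodule ℂ H) →L[ℂ] (Gᗮ : Submodule ℂ H))
    (hQ : ∀ x : (Gᗮ : Submodule ℂ H), T x - Q x ∈ G)
    (hQ2 : Q ^ 2 = 0)
    (h : absOp T ≤ absRe T) :
    adjoint T = T := by
  haveI : CompleteSpace G := hGc.completeSpace_coe
  have hTT : (0 : H →L[ℂ] H) ≤ adjoint T * T := by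
    have := star_mul_self_nonneg T
    rwa [star_eq_adjoint] at this
  have hApos : (0 : H →L[ℂ] H) ≤ absOp T := CFC.sqrt_nonneg _
  have hAsa : IsSelfAdjoint (absOp T) := IsSelfAdjoint.of_nonneg hApos
  have hA2 : absOp T ^ 2 = adjoint T * T := CFC.sq_sqrt _ hTT
  have hRsa : IsSelfAdjoint (reOp T) := by
    rw [IsSelfAdjoint, reOp, star_smul, star_add, star_eq_adjoint, star_eq_adjoint,
      adjoint_adjoint]
    rw [add_comm]
    congr 1
    simp
  have hBpos : (0 : H →L[ℂ] H) ≤ absRe T := CFC.sqrt_nonneg _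
  have hBsa : IsSelfAdjoint (absRe T) := IsSelfAdjoint.of_nonneg hBpos
  have hB2 : absRe T ^ 2 = reOp T ^ 2 := CFC.sq_sqrt _ hRsa.sq_nonneg
  -- ‖A z‖ = ‖T z‖
  have hnA : ∀ z : H, ‖absOp T z‖ = ‖T z‖ := by
    intro z
    have h1 := sqnorm_eq' (absOp T) (adjoint T * T) hAsa hA2 z
    have h2 : (inner ℂ ((adjoint T * T) z) z : ℂ) = inner ℂ (T z) (T z) := by
      have h0 : (adjoint T * T) z = adjoint T (T z) := rfl
      rw [h0, adjoint_inner_left]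
    rw [h2, inner_self_eq_norm_sq (𝕜 := ℂ)] at h1
    nlinarith [norm_nonneg (absOp T z), norm_nonneg (T z)]
  -- ‖B z‖ = ‖Re T z‖
  have hnB : ∀ z : H, ‖absRe T z‖ = ‖reOp T z‖ := by
    intro z
    have h1 := sqnorm_eq' (absRe T) (reOp T ^ 2) hBsa hB2 z
    have h2 : (inner ℂ ((reOp T ^ 2) z) z : ℂ) = inner ℂ (reOp T z) (reOp T z) := by
      have h0 : (reOp T ^ 2) z = reOp T (reOp T z) := rfl
      calc (inner ℂ ((reOp T ^ 2) z) z : ℂ)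
          = inner ℂ ((adjoint (reOp T)) (reOp T z)) z := by rw [hRsa.adjoint_eq, ← h0]
      _ = inner ℂ (reOp T z) (reOp T z) := adjoint_inner_left _ _ _
    rw [h2, inner_self_eq_norm_sq (𝕜 := ℂ)] at h1
    nlinarith [norm_nonneg (absRe T z), norm_nonneg (reOp T z)]
  -- the order hypothesis pointwise
  have hle : ∀ z : H, re (inner ℂ (absOp T z) z : ℂ) ≤ re (inner ℂ (absRe T z) z : ℂ) := by
    intro z
    have h0 := ((le_def _ _).mp h).re_inner_nonneg_left z
    rw [sub_apply, inner_sub_left, map_sub] at h0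
    linarith
  have hA0 : ∀ z : H, 0 ≤ re (inner ℂ (absOp T z) z : ℂ) := fun z =>
    ((nonneg_iff_isPositive _).mp hApos).re_inner_nonneg_left z
  have hB0 : ∀ z : H, 0 ≤ re (inner ℂ (absRe T z) z : ℂ) := fun z =>
    ((nonneg_iff_isPositive _).mp hBpos).re_inner_nonneg_left z
  have hTpos : (0:ℝ) < ‖T‖ := norm_pos_iff.mpr hT0
  have hadjnorm : ‖adjoint T‖ = ‖T‖ :=
    (ContinuousLinearMap.adjoint : (H →L[ℂ] H) ≃ₗᵢ⋆[ℂ] (H →L[ℂ] H)).norm_map T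
  -- ‖Re T z‖ ≤ ‖T‖ * ‖z‖
  have hReTnorm : ∀ z : H, ‖reOp T z‖ ≤ ‖T‖ * ‖z‖ := by
    intro z
    have h0 : reOp T z = (2:ℂ)⁻¹ • (T z + adjoint T z) := rfl
    rw [h0, norm_smul]
    have h1 : ‖T z + adjoint T z‖ ≤ 2 * (‖T‖ * ‖z‖) := by
      calc ‖T z + adjoint T z‖ ≤ ‖T z‖ + ‖adjoint T z‖ := norm_add_le _ _
      _ ≤ ‖T‖ * ‖z‖ + ‖adjoint T‖ * ‖z‖ := add_le_add (T.le_opNorm z) ((adjoint T).le_opNorm z)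
      _ = 2 * (‖T‖ * ‖z‖) := by rw [hadjnorm]; ring
    have h2 : ‖(2:ℂ)⁻¹‖ = 2⁻¹ := by norm_num
    rw [h2]
    linarith
  ------------------------------------------------------------------
  -- STEP A : T* = T on G
  ------------------------------------------------------------------
  have stepA : ∀ x ∈ G, adjoint T x = T x := by
    intro x hx
    -- re ⟪A(Ax), x⟫ = ‖T‖² ‖x‖²
    have e1 : re (inner ℂ (absOp T (absOp T x)) x : ℂ) = ‖T‖ ^ 2 * ‖x‖ ^ 2 := by
      have h0 : absOp T (absOp T x) = (adjoint T * T) x := by rw [← hA2]; rfl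
      have h2 : (inner ℂ ((adjoint T * T) x) x : ℂ) = inner ℂ (T x) (T x) := by
        have : (adjoint T * T) x = adjoint T (T x) := rfl
        rw [this, adjoint_inner_left]
      rw [h0, h2, inner_self_eq_norm_sq (𝕜 := ℂ), hS x hx]
      ring
    -- re ⟪A(Ax), Ax⟫ ≤ ‖T‖³‖x‖²
    have e2 : re (inner ℂ (absOp T (absOp T x)) (absOp T x) : ℂ) ≤ ‖T‖ ^ 3 * ‖x‖ ^ 2 := by
      have hAx : ‖absOp T x‖ = ‖T‖ * ‖x‖ := by rw [hnA, hS x hx]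
      have hAAx : ‖absOp T (absOp T x)‖ ≤ ‖T‖ ^ 2 * ‖x‖ := by
        rw [hnA]
        calc ‖T (absOp T x)‖ ≤ ‖T‖ * ‖absOp T x‖ := T.le_opNorm _
        _ = ‖T‖ ^ 2 * ‖x‖ := by rw [hAx]; ring
      calc re (inner ℂ (absOp T (absOp T x)) (absOp T x) : ℂ)
          ≤ ‖(inner ℂ (absOp T (absOp T x)) (absOp T x) : ℂ)‖ := re_le_norm _
      _ ≤ ‖absOp T (absOp T x)‖ * ‖absOp T x‖ := norm_inner_le_norm _ _
      _ ≤ (‖T‖ ^ 2 * ‖x‖) * (‖T‖ * ‖x‖) := by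
          apply mul_le_mul hAAx (le_of_eq hAx) (norm_nonneg _)
          positivity
      _ = ‖T‖ ^ 3 * ‖x‖ ^ 2 := by ring
    -- re ⟪Ax, x⟫ ≥ ‖T‖ ‖x‖²
    have e3 : ‖T‖ * ‖x‖ ^ 2 ≤ re (inner ℂ (absOp T x) x : ℂ) := by
      have hcs := cs_sq' (absOp T) hApos (absOp T x) x
      rw [e1] at hcs
      by_cases hx0 : ‖x‖ = 0
      · rw [hx0]
        simpa using hA0 x
      · have hxpos : 0 < ‖x‖ := lt_of_le_of_ne (norm_nonneg x) (Ne.symm hx0)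
        have h1 : ‖T‖ ^ 4 * ‖x‖ ^ 4 ≤
            ‖T‖ ^ 3 * ‖x‖ ^ 2 * re (inner ℂ (absOp T x) x : ℂ) := by
          nlinarith [hcs, mul_le_mul_of_nonneg_right e2 (hA0 x)]
        have h2 : (0:ℝ) < ‖T‖ ^ 3 * ‖x‖ ^ 2 := by positivity
        have h3 : ‖T‖ ^ 3 * ‖x‖ ^ 2 * (‖T‖ * ‖x‖ ^ 2) ≤
            ‖T‖ ^ 3 * ‖x‖ ^ 2 * re (inner ℂ (absOp T x) x : ℂ) := by
          calc ‖T‖ ^ 3 * ‖x‖ ^ 2 * (‖T‖ * ‖x‖ ^ 2) = ‖T‖ ^ 4 * ‖x‖ ^ 4 := by ring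
          _ ≤ _ := h1
        exact le_of_mul_le_mul_left h3 h2
    -- B x = ‖T‖ • x
    have e4 : absRe T x = ((‖T‖ : ℝ) : ℂ) • x := by
      apply eq_smul_of' _ _ _ (le_of_lt hTpos)
      · rw [hnB]; exact hReTnorm x
      · exact le_trans e3 (hle x)
    -- ‖Re T x‖ = ‖T‖ ‖x‖
    have e5 : ‖reOp T x‖ = ‖T‖ * ‖x‖ := by
      rw [← hnB, e4, norm_smul]
      simp [Complex.norm_real, abs_of_nonneg (le_of_lt hTpos)]
    -- parallelogram
    have e6 : T x + adjoint T x = (2:ℂ) • reOp T x := by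
      have h0 : reOp T x = (2:ℂ)⁻¹ • (T x + adjoint T x) := rfl
      rw [h0, smul_smul]
      norm_num
    have e7 : ‖T x + adjoint T x‖ = 2 * (‖T‖ * ‖x‖) := by
      rw [e6, norm_smul, e5]
      norm_num
    have e8 : ‖T x - adjoint T x‖ ^ 2 ≤ 0 := by
      have hp := parallelogram_law_with_norm ℂ (T x) (adjoint T x)
      have h9 : ‖adjoint T x‖ ≤ ‖T‖ * ‖x‖ := by
        calc ‖adjoint T x‖ ≤ ‖adjoint T‖ * ‖x‖ := (adjoint T).le_opNorm x
        _ = ‖T‖ * ‖x‖ := by rw [hadjnorm]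
      have h10 : ‖T x‖ = ‖T‖ * ‖x‖ := hS x hx
      nlinarith [norm_nonneg (adjoint T x)]
    have e9 : T x - adjoint T x = 0 := by
      have : ‖T x - adjoint T x‖ = 0 := by
        nlinarith [norm_nonneg (T x - adjoint T x)]
      rwa [norm_eq_zero] at this
    exact (sub_eq_zero.mp e9).symm
    ------------------------------------------------------------------
  -- STEP B : invariance of the orthogonal complement, T² = 0 there
  ------------------------------------------------------------------
  have hTperp : ∀ y ∈ Gᗮ, T y ∈ Gᗮ := by
    intro y hy
    rw [Submodule.mem_orthogonal']
    intro u hu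
    have h1 : (inner ℂ (T y) u : ℂ) = inner ℂ y (adjoint T u) := (adjoint_inner_right T y u).symm
    rw [h1, stepA u hu]
    exact (Submodule.mem_orthogonal' G y).mp hy _ (hGinv u hu)
  have hTsperp : ∀ y ∈ Gᗮ, adjoint T y ∈ Gᗮ := by
    intro y hy
    rw [Submodule.mem_orthogonal']
    intro u hu
    rw [adjoint_inner_left]
    exact (Submodule.mem_orthogonal' G y).mp hy _ (hGinv u hu)
  have hTQ : ∀ x : (Gᗮ : Submodule ℂ H), T ↑x = ((Q x : (Gᗮ : Submodule ℂ H)) : H) := by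
    intro x
    have h1 := hQ x
    have h2 : T ↑x - ((Q x : (Gᗮ : Submodule ℂ H)) : H) ∈ Gᗮ :=
      Submodule.sub_mem _ (hTperp _ x.2) (SetLike.coe_mem (Q x))
    have h3 : T ↑x - ((Q x : (Gᗮ : Submodule ℂ H)) : H) = 0 :=
      Submodule.disjoint_def.mp (Submodule.orthogonal_disjoint G) _ h1 h2
    exact sub_eq_zero.mp h3
  have hT2 : ∀ y ∈ Gᗮ, T (T y) = 0 := by
    intro y hy
    have h1 : T y = ((Q ⟨y, hy⟩ : (Gᗮ : Submodule ℂ H)) : H) := hTQ ⟨y, hy⟩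
    rw [h1, hTQ (Q ⟨y, hy⟩)]
    have h2 : Q (Q ⟨y, hy⟩) = 0 := by
      have h3 : (Q ^ 2) ⟨y, hy⟩ = Q (Q ⟨y, hy⟩) := by rw [sq]; rfl
      rw [hQ2] at h3
      simpa using h3.symm
    rw [h2]
    simp
  ------------------------------------------------------------------
  -- STEP C : T = 0 on the orthogonal complement
  ------------------------------------------------------------------
  set prj : H →L[ℂ] H := G.subtypeL.comp (G.orthogonalProjectionOnto) with hprj
  set P' : H →L[ℂ] H := ContinuousLinearMap.id ℂ H - prj with hP'
  have hP'app : ∀ z : H, P' z = z - ↑(G.orthogonalProjectionOnto z) := by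
    intro z; simp [hP', hprj]
  have hP'mem : ∀ z : H, P' z ∈ Gᗮ := by
    intro z
    rw [hP'app]
    exact Submodule.sub_starProjection_mem_orthogonal z
  have hP'fix : ∀ y ∈ Gᗮ, P' y = y := by
    intro y hy
    have h0 : G.orthogonalProjectionOnto y = 0 :=
      Submodule.orthogonalProjectionOnto_apply_of_mem_orthogonal hy
    rw [hP'app, h0]
    simp
  have hP'norm : ∀ z : H, ‖P' z‖ ≤ ‖z‖ := by
    intro z
    have h1 : (inner ℂ (↑(G.orthogonalProjectionOnto z) : H) (P' z) : ℂ) = 0 :=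
      (Submodule.mem_orthogonal G _).mp (hP'mem z) _ (SetLike.coe_mem _)
    have h2 : z = ↑(G.orthogonalProjectionOnto z) + P' z := by
      rw [hP'app]; abel
    have h3 : ‖z‖ ^ 2 = ‖(↑(G.orthogonalProjectionOnto z) : H)‖ ^ 2 + ‖P' z‖ ^ 2 := by
      conv_lhs => rw [h2]
      have h4 := norm_add_sq_eq_norm_sq_add_norm_sq_of_inner_eq_zero _ _ h1
      simpa [pow_two] using h4
    nlinarith [norm_nonneg ((↑(G.orthogonalProjectionOnto z) : H)), norm_nonneg (P' z),
      norm_nonneg z]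
  set M := ‖T.comp P'‖ with hM
  have hM0 : (0:ℝ) ≤ M := norm_nonneg _
  have hM1 : ∀ y ∈ Gᗮ, ‖T y‖ ≤ M * ‖y‖ := by
    intro y hy
    have h0 : T y = (T.comp P') y := by
      simp [ContinuousLinearMap.comp_apply, hP'fix y hy]
    rw [h0]
    exact (T.comp P').le_opNorm y
  have hM2 : ∀ y ∈ Gᗮ, ‖adjoint T y‖ ≤ M * ‖y‖ := by
    intro y hy
    by_cases h0 : ‖adjoint T y‖ = 0
    · rw [h0]; positivity
    · have hpos : 0 < ‖adjoint T y‖ := lt_of_le_of_ne (norm_nonneg _) (Ne.symm h0)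
      have h1 : ‖adjoint T y‖ ^ 2 = re (inner ℂ y (T (adjoint T y)) : ℂ) := by
        rw [← adjoint_inner_left T, inner_self_eq_norm_sq (𝕜 := ℂ)]
      have h2 : ‖adjoint T y‖ ^ 2 ≤ ‖y‖ * (M * ‖adjoint T y‖) := by
        rw [h1]
        calc re (inner ℂ y (T (adjoint T y)) : ℂ)
            ≤ ‖(inner ℂ y (T (adjoint T y)) : ℂ)‖ := re_le_norm _
        _ ≤ ‖y‖ * ‖T (adjoint T y)‖ := norm_inner_le_norm _ _
        _ ≤ ‖y‖ * (M * ‖adjoint T y‖) := by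
            have := hM1 _ (hTsperp y hy)
            exact mul_le_mul_of_nonneg_left this (norm_nonneg y)
      nlinarith [hpos]
  -- the key contraction estimate
  have hKey : ∀ y ∈ Gᗮ, ‖T y‖ ≤ (9/10) * (M * ‖y‖) := by
    intro y hy
    have ht0 : (0:ℝ) ≤ ‖T y‖ := norm_nonneg _
    have hc0 : (0:ℝ) ≤ ‖y‖ := norm_nonneg _
    have htM : ‖T y‖ ≤ M * ‖y‖ := hM1 y hy
    have e1 : re (inner ℂ (absOp T (absOp T y)) y : ℂ) = ‖T y‖ ^ 2 := by
      have h0 : absOp T (absOp T y) = (adjoint T * T) y := by rw [← hA2]; rfl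
      have h2 : (inner ℂ ((adjoint T * T) y) y : ℂ) = inner ℂ (T y) (T y) := by
        have h3 : (adjoint T * T) y = adjoint T (T y) := rfl
        rw [h3, adjoint_inner_left]
      rw [h0, h2, inner_self_eq_norm_sq (𝕜 := ℂ)]
    have e3 : re (inner ℂ (absOp T (absOp T y)) (absOp T y) : ℂ) ≤ M * ‖T y‖ ^ 2 := by
      have h0 : absOp T (absOp T y) = (adjoint T * T) y := by rw [← hA2]; rfl
      have hAy : ‖absOp T y‖ = ‖T y‖ := hnA y
      have hup : ‖absOp T (absOp T y)‖ ≤ M * ‖T y‖ := by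
        rw [h0]
        exact hM2 (T y) (hTperp y hy)
      calc re (inner ℂ (absOp T (absOp T y)) (absOp T y) : ℂ)
          ≤ ‖(inner ℂ (absOp T (absOp T y)) (absOp T y) : ℂ)‖ := re_le_norm _
      _ ≤ ‖absOp T (absOp T y)‖ * ‖absOp T y‖ := norm_inner_le_norm _ _
      _ ≤ (M * ‖T y‖) * ‖T y‖ := by
          apply mul_le_mul hup (le_of_eq hAy) (norm_nonneg _) (by positivity)
      _ = M * ‖T y‖ ^ 2 := by ring
    have ecross : re (inner ℂ (T y) (adjoint T y) : ℂ) = 0 := by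
      have h0 : (inner ℂ (T y) (adjoint T y) : ℂ) = inner ℂ (T (T y)) y :=
        adjoint_inner_right T (T y) y
      rw [h0, hT2 y hy]
      simp
    have hs : ‖adjoint T y‖ ≤ M * ‖y‖ := hM2 y hy
    have e4 : ‖absRe T y‖ ^ 2 ≤ M ^ 2 * ‖y‖ ^ 2 / 2 := by
      rw [hnB]
      have h0 : reOp T y = (2:ℂ)⁻¹ • (T y + adjoint T y) := rfl
      have h1 : ‖T y + adjoint T y‖ ^ 2 = ‖T y‖ ^ 2 + ‖adjoint T y‖ ^ 2 := by
        rw [norm_add_sq (𝕜 := ℂ), ecross]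
        ring
      have h2 : ‖reOp T y‖ ^ 2 = (‖T y‖ ^ 2 + ‖adjoint T y‖ ^ 2) / 4 := by
        rw [h0, norm_smul]
        have h3 : ‖(2:ℂ)⁻¹‖ = 2⁻¹ := by norm_num
        rw [h3, mul_pow, h1]
        ring
      rw [h2]
      nlinarith [norm_nonneg (adjoint T y)]
    have e5 : re (inner ℂ (absOp T y) y : ℂ) ≤ (71/100) * (M * ‖y‖ ^ 2) := by
      have h1 : re (inner ℂ (absRe T y) y : ℂ) ≤ ‖absRe T y‖ * ‖y‖ :=
        (re_le_norm _).trans (norm_inner_le_norm _ _)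
      have h2 : ‖absRe T y‖ ≤ (71/100) * (M * ‖y‖) := by
        nlinarith [e4, norm_nonneg (absRe T y), hM0, hc0, mul_nonneg hM0 hc0]
      calc re (inner ℂ (absOp T y) y : ℂ) ≤ re (inner ℂ (absRe T y) y : ℂ) := hle y
      _ ≤ ‖absRe T y‖ * ‖y‖ := h1
      _ ≤ ((71/100) * (M * ‖y‖)) * ‖y‖ := mul_le_mul_of_nonneg_right h2 hc0
      _ = (71/100) * (M * ‖y‖ ^ 2) := by ring
    have hcs := cs_sq' (absOp T) hApos (absOp T y) y
    rw [e1] at hcs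
    have e6 : (‖T y‖ ^ 2) ^ 2 ≤ (M * ‖T y‖ ^ 2) * ((71/100) * (M * ‖y‖ ^ 2)) := by
      calc (‖T y‖ ^ 2) ^ 2
          ≤ re (inner ℂ (absOp T (absOp T y)) (absOp T y) : ℂ) *
            re (inner ℂ (absOp T y) y : ℂ) := hcs
      _ ≤ (M * ‖T y‖ ^ 2) * ((71/100) * (M * ‖y‖ ^ 2)) := by
          apply mul_le_mul e3 e5 (hA0 y) (by positivity)
    by_cases ht : ‖T y‖ = 0
    · rw [ht]; positivity
    · have htpos : 0 < ‖T y‖ := lt_of_le_of_ne ht0 (Ne.symm ht)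
      have hk0 : (0:ℝ) ≤ M * ‖y‖ := mul_nonneg hM0 hc0
      have h7 : ‖T y‖ ^ 2 * ‖T y‖ ^ 2 ≤ ‖T y‖ ^ 2 * ((71/100) * (M * ‖y‖) ^ 2) := by
        nlinarith [e6]
      have h8 : ‖T y‖ ^ 2 ≤ (71/100) * (M * ‖y‖) ^ 2 :=
        le_of_mul_le_mul_left h7 (by positivity)
      nlinarith [h8, ht0, hk0, mul_nonneg ht0 hk0]
  have hMz : M = 0 := by
    have hb : ‖T.comp P'‖ ≤ (9/10) * M := by
      apply opNorm_le_bound _ (by positivity)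
      intro z
      have h1 : (T.comp P') z = T (P' z) := rfl
      rw [h1]
      calc ‖T (P' z)‖ ≤ (9/10) * (M * ‖P' z‖) := hKey _ (hP'mem z)
      _ ≤ (9/10) * M * ‖z‖ := by
          have := hP'norm z
          nlinarith [hM0]
    rw [← hM] at hb
    linarith
  have hTz : ∀ y ∈ Gᗮ, T y = 0 := by
    intro y hy
    have h1 := hM1 y hy
    rw [hMz, zero_mul] at h1
    exact norm_le_zero_iff.mp h1
  have hTsz : ∀ y ∈ Gᗮ, adjoint T y = 0 := by
    intro y hy
    have h1 := hM2 y hy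
    rw [hMz, zero_mul] at h1
    exact norm_le_zero_iff.mp h1
  ------------------------------------------------------------------
  -- conclusion
  ------------------------------------------------------------------
  ext z
  have hz1 : (↑(G.orthogonalProjectionOnto z) : H) ∈ G := SetLike.coe_mem _
  have hz2 : z - ↑(G.orthogonalProjectionOnto z) ∈ Gᗮ := Submodule.sub_starProjection_mem_orthogonal z
  have hdec : z = ↑(G.orthogonalProjectionOnto z) + (z - ↑(G.orthogonalProjectionOnto z)) := by abel
  calc adjoint T z
      = adjoint T ↑(G.orthogonalProjectionOnto z) +
        adjoint T (z - ↑(G.orthogonalProjectionOnto z)) := by rw [← map_add, ← hdec]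
  _ = T ↑(G.orthogonalProjectionOnto z) + 0 := by rw [stepA _ hz1, hTsz _ hz2]
  _ = T ↑(G.orthogonalProjectionOnto z) + T (z - ↑(G.orthogonalProjectionOnto z)) := by
      rw [hTz _ hz2]
  _ = T z := by rw [← map_add, ← hdec]
end

section
/- Let T be a contractive m-quasi-isometry for some integer m ≥ 3 satisfying |T| ≤ |Re T|. Then N(I - T*T) = N(I - TT*) = closure(R(T^m)), this subspace reduces T to a symmetry, and T = S ⊕ Q with S a symmetry and Q^m = 0. -/
open ContinuousLinearMap

set_option linter.unusedSectionVars false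
set_option maxHeartbeats 1000000
set_option synthInstance.maxHeartbeats 400000

local notation "⟪" x ", " y "⟫" => @inner ℂ _ _ x y

section Helpers

variable {H : Type*} [NormedAddCommGroup H] [InnerProductSpace ℂ H] [CompleteSpace H]

/-- A contraction with `re⟪Sx,x⟫ = ‖x‖²` fixes `x`. -/
lemma fix_of_inner (S : H →L[ℂ] H) (hS : ‖S‖ ≤ 1) (x : H)
    (hx : RCLike.re ⟪S x, x⟫ = ‖x‖ ^ 2) : S x = x := by
  have h1 : ‖S x‖ ≤ ‖x‖ := by
    calc ‖S x‖ ≤ ‖S‖ * ‖x‖ := S.le_opNorm x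
    _ ≤ 1 * ‖x‖ := by gcongr
    _ = ‖x‖ := one_mul _
  have h2 : ‖S x - x‖ ^ 2 = ‖S x‖ ^ 2 - ‖x‖ ^ 2 := by
    rw [@norm_sub_sq ℂ, hx]; ring
  have h4 : ‖S x - x‖ = 0 := by nlinarith [norm_nonneg (S x - x), norm_nonneg (S x)]
  rw [← sub_eq_zero]; exact norm_eq_zero.mp h4

/-- For a selfadjoint `S`, `re⟪S² x, x⟫ = ‖Sx‖²`. -/
lemma re_inner_sq (S : H →L[ℂ] H) (hS : IsSelfAdjoint S) (x : H) :
    RCLike.re ⟪(S ^ 2) x, x⟫ = ‖S x‖ ^ 2 := by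
  have h : (S ^ 2) x = S (S x) := by rw [pow_two]; rfl
  have h2 := adjoint_inner_left S x (S x)
  rw [hS.adjoint_eq] at h2
  rw [h, h2]
  exact inner_self_eq_norm_sq _

/-- norm of a nonneg operator squared. -/
lemma norm_sq_of_nonneg (P : H →L[ℂ] H) (hP : 0 ≤ P) : ‖P‖ ^ 2 = ‖P ^ 2‖ := by
  have hsa : IsSelfAdjoint P := ((nonneg_iff_isPositive P).mp hP).isSelfAdjoint
  have := CStarRing.norm_star_mul_self (x := P)
  rw [hsa.star_eq] at this
  rw [sq P, this, sq]

/-- A nonneg contraction preserving the norm of `x` fixes `x`. -/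
lemma pos_norm_fix (P : H →L[ℂ] H) (hP : 0 ≤ P) (hP1 : ‖P‖ ≤ 1) (x : H)
    (hx : ‖P x‖ = ‖x‖) : P x = x := by
  set C := CFC.sqrt P with hC
  have hC0 : (0 : H →L[ℂ] H) ≤ C := CFC.sqrt_nonneg _
  have hCsa : IsSelfAdjoint C := ((nonneg_iff_isPositive C).mp hC0).isSelfAdjoint
  have hC2 : C ^ 2 = P := CFC.sq_sqrt P hP
  have hCn : ‖C‖ ≤ 1 := by
    have := norm_sq_of_nonneg C hC0
    rw [hC2] at this
    nlinarith [norm_nonneg C]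
  have hCx : ‖C x‖ = ‖x‖ := by
    have hle : ‖C x‖ ≤ ‖x‖ := by
      calc ‖C x‖ ≤ ‖C‖ * ‖x‖ := C.le_opNorm x
      _ ≤ 1 * ‖x‖ := by gcongr
      _ = ‖x‖ := one_mul _
    have hge : ‖x‖ ≤ ‖C x‖ := by
      have h1 : P x = C (C x) := by rw [← hC2, pow_two]; rfl
      calc ‖x‖ = ‖C (C x)‖ := by rw [← h1, hx]
      _ ≤ ‖C‖ * ‖C x‖ := C.le_opNorm _
      _ ≤ 1 * ‖C x‖ := by gcongr
      _ = ‖C x‖ := one_mul _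
    linarith
  apply fix_of_inner P hP1
  rw [← hC2, re_inner_sq C hCsa, hCx]

lemma norm_eq_of_sq {a b : ℝ} (ha : 0 ≤ a) (hb : 0 ≤ b) (h : a ^ 2 = b ^ 2) : a = b := by
  nlinarith

lemma isometry_fix (T : H →L[ℂ] H) (hT : ‖T‖ ≤ 1) (z : H) (hz : ‖T z‖ = ‖z‖) :
    adjoint T (T z) = z := by
  have hadj : ‖adjoint T‖ ≤ 1 := by
    rw [← star_eq_adjoint]; rwa [norm_star]
  have hn : ‖adjoint T * T‖ ≤ 1 := by
    calc ‖adjoint T * T‖ ≤ ‖adjoint T‖ * ‖T‖ := norm_mul_le _ _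
    _ ≤ 1 * 1 := by gcongr
    _ = 1 := one_mul _
  have := fix_of_inner (adjoint T * T) hn z (by
    rw [ContinuousLinearMap.mul_apply, adjoint_inner_left T z (T z), inner_self_eq_norm_sq, hz])
  rwa [ContinuousLinearMap.mul_apply] at this

lemma key (T : H →L[ℂ] H) (hT : ‖T‖ ≤ 1) (h : absOp T ≤ absRe T)
    (x : H) (hx : adjoint T (T x) = x) :
    adjoint T x = T x ∧ T (T x) = x ∧ T (adjoint T x) = x := by
  have hadj : ‖adjoint T‖ ≤ 1 := by rw [← star_eq_adjoint]; rwa [norm_star]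
  have hTT : (0 : H →L[ℂ] H) ≤ adjoint T * T := by
    have := star_mul_self_nonneg T; rwa [star_eq_adjoint] at this
  set A := absOp T with hA
  set B := absRe T with hB
  set R := reOp T with hR
  have hA0 : (0 : H →L[ℂ] H) ≤ A := CFC.sqrt_nonneg _
  have hA2 : A ^ 2 = adjoint T * T := CFC.sq_sqrt _ hTT
  have hAsa : IsSelfAdjoint A := ((nonneg_iff_isPositive A).mp hA0).isSelfAdjoint
  have hAn : ‖A‖ ≤ 1 := by
    have h1 := norm_sq_of_nonneg A hA0
    rw [hA2] at h1
    have h2 : ‖adjoint T * T‖ ≤ 1 := by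
      calc ‖adjoint T * T‖ ≤ ‖adjoint T‖ * ‖T‖ := norm_mul_le _ _
      _ ≤ 1 * 1 := by gcongr
      _ = 1 := one_mul _
    nlinarith [norm_nonneg A]
  have hxnorm : ‖T x‖ = ‖x‖ := by
    have h1 : RCLike.re ⟪adjoint T (T x), x⟫ = RCLike.re ⟪x, x⟫ := by rw [hx]
    rw [adjoint_inner_left T x (T x), inner_self_eq_norm_sq, inner_self_eq_norm_sq] at h1
    exact norm_eq_of_sq (norm_nonneg _) (norm_nonneg _) h1
  have hAx : ‖A x‖ = ‖x‖ := by
    have h1 := re_inner_sq A hAsa x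
    rw [hA2, ContinuousLinearMap.mul_apply, hx, inner_self_eq_norm_sq] at h1
    exact (norm_eq_of_sq (norm_nonneg _) (norm_nonneg _) h1).symm
  have hAfix : A x = x := pos_norm_fix A hA0 hAn x hAx
  have hRsa : IsSelfAdjoint R := by
    rw [hR]
    unfold reOp
    rw [IsSelfAdjoint, star_smul, star_add, star_eq_adjoint, star_eq_adjoint, adjoint_adjoint]
    simp [add_comm]
  have hRn : ‖R‖ ≤ 1 := by
    rw [hR]
    unfold reOp
    rw [norm_smul]
    have : ‖(2 : ℂ)⁻¹‖ = 2⁻¹ := by simp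
    rw [this]
    have h1 : ‖T + adjoint T‖ ≤ 2 := by
      calc ‖T + adjoint T‖ ≤ ‖T‖ + ‖adjoint T‖ := norm_add_le _ _
      _ ≤ 1 + 1 := by gcongr
      _ = 2 := by norm_num
    nlinarith
  have hR2 : (0 : H →L[ℂ] H) ≤ R ^ 2 := by
    have := star_mul_self_nonneg R
    rwa [hRsa.star_eq, ← sq] at this
  have hB0 : (0 : H →L[ℂ] H) ≤ B := CFC.sqrt_nonneg _
  have hB2 : B ^ 2 = R ^ 2 := CFC.sq_sqrt _ hR2
  have hBn : ‖B‖ ≤ 1 := by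
    have h1 := norm_sq_of_nonneg B hB0
    rw [hB2] at h1
    have h2 : ‖R ^ 2‖ ≤ 1 := by
      rw [sq]
      calc ‖R * R‖ ≤ ‖R‖ * ‖R‖ := norm_mul_le _ _
      _ ≤ 1 * 1 := by gcongr
      _ = 1 := one_mul _
    nlinarith [norm_nonneg B]
  have hBfix : B x = x := by
    apply fix_of_inner B hBn
    have hup : RCLike.re ⟪B x, x⟫ ≤ ‖x‖ ^ 2 := by
      calc RCLike.re ⟪B x, x⟫ ≤ ‖B x‖ * ‖x‖ := re_inner_le_norm _ _
      _ ≤ (‖B‖ * ‖x‖) * ‖x‖ := by gcongr; exact B.le_opNorm x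
      _ ≤ (1 * ‖x‖) * ‖x‖ := by gcongr
      _ = ‖x‖ ^ 2 := by ring
    have hlo : ‖x‖ ^ 2 ≤ RCLike.re ⟪B x, x⟫ := by
      have hpos := ((le_def A B).mp h).inner_nonneg_left x
      rw [sub_apply, inner_sub_left] at hpos
      replace hpos := (RCLike.nonneg_iff.mp hpos).1
      rw [map_sub] at hpos
      rw [hAfix, inner_self_eq_norm_sq] at hpos
      linarith
    linarith
  have hR2x : R (R x) = x := by
    have h1 : (B ^ 2) x = x := by rw [pow_two, ContinuousLinearMap.mul_apply, hBfix, hBfix]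
    rw [hB2, pow_two, ContinuousLinearMap.mul_apply] at h1
    exact h1
  have hRx : ‖R x‖ = ‖x‖ := by
    have h1 := re_inner_sq R hRsa x
    rw [pow_two, ContinuousLinearMap.mul_apply, hR2x, inner_self_eq_norm_sq] at h1
    exact (norm_eq_of_sq (norm_nonneg _) (norm_nonneg _) h1).symm
  have hsum : ‖T x + adjoint T x‖ = 2 * ‖x‖ := by
    have h1 : R x = (2 : ℂ)⁻¹ • (T x + adjoint T x) := by
      rw [hR]; unfold reOp; rw [smul_apply, add_apply]
    have h2 : ‖R x‖ = 2⁻¹ * ‖T x + adjoint T x‖ := by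
      rw [h1, norm_smul]; norm_num
    rw [hRx] at h2
    linarith
  have hT'x : ‖adjoint T x‖ = ‖x‖ := by
    have hle : ‖adjoint T x‖ ≤ ‖x‖ := by
      calc ‖adjoint T x‖ ≤ ‖adjoint T‖ * ‖x‖ := (adjoint T).le_opNorm x
      _ ≤ 1 * ‖x‖ := by gcongr
      _ = ‖x‖ := one_mul _
    have hge : 2 * ‖x‖ ≤ ‖T x‖ + ‖adjoint T x‖ := by
      rw [← hsum]; exact norm_add_le _ _
    rw [hxnorm] at hge
    linarith
  have heq : adjoint T x = T x := by
    have hpar := parallelogram_law_with_norm ℂ (T x) (adjoint T x)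
    rw [hsum, hxnorm, hT'x] at hpar
    have h1 : ‖T x - adjoint T x‖ ^ 2 = 0 := by nlinarith
    have h2 : T x - adjoint T x = 0 := by
      rw [← norm_eq_zero]; nlinarith [norm_nonneg (T x - adjoint T x)]
    rw [sub_eq_zero] at h2
    exact h2.symm
  have hTT'n : ‖T * adjoint T‖ ≤ 1 := by
    calc ‖T * adjoint T‖ ≤ ‖T‖ * ‖adjoint T‖ := norm_mul_le _ _
    _ ≤ 1 * 1 := by gcongr
    _ = 1 := one_mul _
  have hTT' : T (adjoint T x) = x := by
    have h5 := adjoint_inner_left (adjoint T) x (adjoint T x)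
    rw [adjoint_adjoint] at h5
    have := fix_of_inner (T * adjoint T) hTT'n x (by
      rw [ContinuousLinearMap.mul_apply, h5, inner_self_eq_norm_sq, hT'x])
    rwa [ContinuousLinearMap.mul_apply] at this
  have hT2 : T (T x) = x := by rw [← heq]; exact hTT'
  exact ⟨heq, hT2, hTT'⟩

lemma mem_ker_iff (T : H →L[ℂ] H) (x : H) :
    x ∈ LinearMap.ker ((1 - adjoint T * T : H →L[ℂ] H) : H →ₗ[ℂ] H) ↔ adjoint T (T x) = x := by
  have hexp : (1 - adjoint T * T) x = x - adjoint T (T x) := by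
    simp [ContinuousLinearMap.sub_apply, ContinuousLinearMap.mul_apply,
      ContinuousLinearMap.one_apply]
  rw [LinearMap.mem_ker, ContinuousLinearMap.coe_coe, hexp, sub_eq_zero, eq_comm]

end Helpers

/-- For a contractive `m`-quasi-isometry (`m ≥ 3`) with `|T| ≤ |Re T|`:
`N(I - T*T) = N(I - TT*) = closure(R(T^m))`, this subspace reduces `T` to a symmetry,
and `T = S ⊕ Q` with `S` a symmetry and `Q^m = 0`. -/
theorem stmt15 {H : Type*} [NormedAddCommGroup H] [InnerProductSpace ℂ H] [CompleteSpace H]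
    (T : H →L[ℂ] H) (hT : ‖T‖ ≤ 1) (m : ℕ) (hm : 3 ≤ m)
    (hqi : ∀ x : H, ‖T ((T ^ m) x)‖ = ‖(T ^ m) x‖)
    (h : absOp T ≤ absRe T) :
    LinearMap.ker ((1 - adjoint T * T : H →L[ℂ] H) : H →ₗ[ℂ] H) = LinearMap.ker ((1 - T * adjoint T : H →L[ℂ] H) : H →ₗ[ℂ] H) ∧
    LinearMap.ker ((1 - adjoint T * T : H →L[ℂ] H) : H →ₗ[ℂ] H) = (LinearMap.range ((T ^ m : H →L[ℂ] H) : H →ₗ[ℂ] H)).topologicalClosure ∧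
    (∀ x ∈ LinearMap.ker ((1 - adjoint T * T : H →L[ℂ] H) : H →ₗ[ℂ] H),
      T x ∈ LinearMap.ker ((1 - adjoint T * T : H →L[ℂ] H) : H →ₗ[ℂ] H) ∧
      adjoint T x ∈ LinearMap.ker ((1 - adjoint T * T : H →L[ℂ] H) : H →ₗ[ℂ] H) ∧
      adjoint T x = T x ∧ T (T x) = x) ∧
    (∀ x ∈ (LinearMap.ker ((1 - adjoint T * T : H →L[ℂ] H) : H →ₗ[ℂ] H))ᗮ,
      T x ∈ (LinearMap.ker ((1 - adjoint T * T : H →L[ℂ] H) : H →ₗ[ℂ] H))ᗮ ∧ (T ^ m) x = 0) := by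
  have hmem : ∀ x, x ∈ LinearMap.ker ((1 - adjoint T * T : H →L[ℂ] H) : H →ₗ[ℂ] H) ↔ adjoint T (T x) = x :=
    mem_ker_iff T
  set K := LinearMap.ker ((1 - adjoint T * T : H →L[ℂ] H) : H →ₗ[ℂ] H) with hK
  have hkey : ∀ x ∈ K, adjoint T x = T x ∧ T (T x) = x ∧ T (adjoint T x) = x :=
    fun x hx => key T hT h x ((hmem x).mp hx)
  have hTK : ∀ x ∈ K, T x ∈ K := by
    intro x hx
    obtain ⟨h1, h2, h3⟩ := hkey x hx
    rw [hmem, h2]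
    exact h1
  have hT'K : ∀ x ∈ K, adjoint T x ∈ K := fun x hx => by
    rw [(hkey x hx).1]; exact hTK x hx
  have hrange : ∀ u : H, (T ^ m) u ∈ K := fun u =>
    (hmem _).mpr (isometry_fix T hT _ (hqi u))
  have claim1 : K = LinearMap.ker ((1 - T * adjoint T : H →L[ℂ] H) : H →ₗ[ℂ] H) := by
    have hexp : ∀ y : H, (1 - T * adjoint T) y = y - T (adjoint T y) := by
      intro y
      simp [ContinuousLinearMap.sub_apply, ContinuousLinearMap.mul_apply,
        ContinuousLinearMap.one_apply]
    ext x
    constructor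
    · intro hx
      rw [LinearMap.mem_ker, ContinuousLinearMap.coe_coe, hexp, sub_eq_zero]
      exact ((hkey x hx).2.2).symm
    · intro hx
      rw [LinearMap.mem_ker, ContinuousLinearMap.coe_coe, hexp, sub_eq_zero] at hx
      have hy : adjoint T x ∈ K := by
        rw [hmem, ← hx]
      have h2 := hTK _ hy
      rwa [← hx] at h2
  have hpow : ∀ x ∈ K, ∀ n : ℕ, (T ^ (2 * n)) x = x := by
    intro x hx n
    induction n with
    | zero => simp
    | succ k ih =>
      have h1 : 2 * (k + 1) = 2 * k + 2 := by ring
      have h2 : (T ^ 2) x = x := by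
        rw [pow_two, ContinuousLinearMap.mul_apply]
        exact (hkey x hx).2.1
      rw [h1, pow_add, ContinuousLinearMap.mul_apply, h2, ih]
  have claim2 : K = (LinearMap.range ((T ^ m : H →L[ℂ] H) : H →ₗ[ℂ] H)).topologicalClosure := by
    apply le_antisymm
    · intro x hx
      apply Submodule.le_topologicalClosure
      rw [LinearMap.mem_range]
      refine ⟨(T ^ m) x, ?_⟩
      have h1 : (T ^ m) ((T ^ m) x) = (T ^ (2 * m)) x := by
        rw [two_mul, pow_add]; rfl
      rw [ContinuousLinearMap.coe_coe, h1, hpow x hx m]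
    · apply Submodule.topologicalClosure_minimal
      · intro y hy
        obtain ⟨u, hu⟩ := LinearMap.mem_range.mp hy
        rw [← hu]
        exact hrange u
      · exact ContinuousLinearMap.isClosed_ker _
  have hKperp : ∀ x ∈ Kᗮ, T x ∈ Kᗮ := by
    intro x hx
    rw [Submodule.mem_orthogonal]
    intro u hu
    have h1 : ⟪adjoint T u, x⟫ = ⟪u, T x⟫ := adjoint_inner_left T x u
    rw [← h1]
    exact (Submodule.mem_orthogonal K x).mp hx _ (hT'K u hu)
  refine ⟨claim1, claim2, fun x hx => ⟨hTK x hx, hT'K x hx, (hkey x hx).1, (hkey x hx).2.1⟩,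
    fun x hx => ⟨hKperp x hx, ?_⟩⟩
  have hpowperp : ∀ n : ℕ, (T ^ n) x ∈ Kᗮ := by
    intro n
    induction n with
    | zero => simpa using hx
    | succ k ih =>
      have h1 : (T ^ (k + 1)) x = T ((T ^ k) x) := by
        rw [pow_succ']; rfl
      rw [h1]
      exact hKperp _ ih
  have h1 : (T ^ m) x ∈ K := hrange x
  have h2 := (Submodule.mem_orthogonal K _).mp (hpowperp m) _ h1
  exact inner_self_eq_zero.mp h2
end
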